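/- Every n ∈ N lies in the relative interior of 𝒞(F_n) for exactly one face F_n of Q. Moreover, for every n ∈ N, the set U_n := {m ∈ N : F_m ⊆ F_n} equals the union of the relative interiors of those cones 𝒞(F), for F a face of Q, that contain n, and U_n is a neighborhood of n in N. -/

import Mathlib

/-- The (algebraic) relative interior of a convex set `C`:  `x ∈ C` such that every
segment in `C` ending at `x` can be prolonged a bit beyond `x` inside `C`. -/
def algRelInt {W : Type*} [AddCommGroup W] [Module ℝ W] (C : Set W) : Set W :=
  {x ∈ C | ∀ y ∈ C, ∃ t : ℝ, 1 < t ∧ y + t • (x - y) ∈ C}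

/-- `F` is a (nonempty, exposed) face of `Q`: the set of points of `Q` where some
linear functional attains its minimum over `Q`. -/
def IsFace {W : Type*} [AddCommGroup W] [Module ℝ W] (Q F : Set W) : Prop :=
  F.Nonempty ∧
    ∃ (f : W →ₗ[ℝ] ℝ) (c : ℝ), (∀ q ∈ Q, c ≤ f q) ∧ F = {q ∈ Q | f q = c}

section helpers

variable {W : Type*} [AddCommGroup W] [Module ℝ W]

lemma algRelInt_subset {C : Set W} : algRelInt C ⊆ C := fun _ h => h.1

/-- prolongation: if a linear functional is ≥ c on F and = c at a
relative interior point, it is = c on all of F. -/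
lemma eq_on_of_relint {F : Set W} {g : W →ₗ[ℝ] ℝ} {c : ℝ} {p : W}
    (hp : p ∈ algRelInt F) (hmin : ∀ q ∈ F, c ≤ g q) (hgp : g p = c) :
    ∀ x ∈ F, g x = c := by
  intro x hx
  obtain ⟨t, ht1, htm⟩ := hp.2 x hx
  have h1 : c ≤ g (x + t • (p - x)) := hmin _ htm
  have h2 : g (x + t • (p - x)) = g x + t * (g p - g x) := by
    simp [map_add, map_smul, map_sub, smul_eq_mul]
  have h3 : c ≤ g x := hmin _ hx
  rw [h2, hgp] at h1
  nlinarith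

/-- a face of a polytope is the convex hull of its vertices. -/
lemma face_eq_convexHull (s : Finset W) (f : W →ₗ[ℝ] ℝ) (c : ℝ)
    (hc : ∀ x ∈ s, c ≤ f x) :
    {q ∈ convexHull ℝ (s : Set W) | f q = c}
      = convexHull ℝ ((s.filter (fun x => f x = c)) : Set W) := by
  apply Set.Subset.antisymm
  · rintro q ⟨hq, hfq⟩
    rw [Finset.convexHull_eq] at hq
    obtain ⟨w, hw0, hw1, hwq⟩ := hq
    have hcm : f q = ∑ y ∈ s, w y * f y := by
      rw [← hwq, Finset.centerMass_eq_of_sum_1 _ _ hw1]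
      simp [map_sum, map_smul, smul_eq_mul]
    have hzero : ∀ y ∈ s, w y * (f y - c) = 0 := by
      have hsum : ∑ y ∈ s, w y * (f y - c) = 0 := by
        have : ∑ y ∈ s, w y * c = c := by
          rw [← Finset.sum_mul, hw1, one_mul]
        calc ∑ y ∈ s, w y * (f y - c) = (∑ y ∈ s, w y * f y) - ∑ y ∈ s, w y * c := by
              rw [← Finset.sum_sub_distrib]; simp only [mul_sub]
          _ = 0 := by rw [this, ← hcm, hfq]; ring
      have hnn : ∀ y ∈ s, 0 ≤ w y * (f y - c) :=
        fun y hy => mul_nonneg (hw0 y hy) (by linarith [hc y hy])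
      intro y hy
      exact (Finset.sum_eq_zero_iff_of_nonneg hnn).1 hsum y hy
    have hwzero : ∀ y ∈ s, y ∉ s.filter (fun x => f x = c) → w y = 0 := by
      intro y hy hyn
      rcases mul_eq_zero.1 (hzero y hy) with h | h
      · exact h
      · exact absurd (Finset.mem_filter.2 ⟨hy, by linarith [sub_eq_zero.1 h]⟩) hyn
    have hA : ∑ y ∈ s.filter (fun x => f x = c), w y = ∑ y ∈ s, w y :=
      Finset.sum_subset (Finset.filter_subset _ _) (fun y hy hyn => hwzero y hy hyn)
    have hBsum : ∑ y ∈ s.filter (fun x => f x = c), w y • id y = ∑ y ∈ s, w y • id y :=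
      Finset.sum_subset (Finset.filter_subset _ _)
        (fun y hy hyn => by rw [hwzero y hy hyn, zero_smul])
    rw [Finset.convexHull_eq]
    refine ⟨w, fun y hy => hw0 y (Finset.mem_filter.1 hy).1, by rw [hA, hw1], ?_⟩
    unfold Finset.centerMass at hwq ⊢
    rw [hA, hBsum]
    exact hwq
  · intro x hx
    constructor
    · exact convexHull_mono (by exact_mod_cast Finset.filter_subset _ s) hx
    · have : (convexHull ℝ ((s.filter (fun x => f x = c)) : Set W)) ⊆ {q | f q = c} := by
        apply convexHull_min _ (convex_hyperplane f.isLinear c)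
        intro y hy
        exact (Finset.mem_filter.1 (by exact_mod_cast hy)).2
      exact this hx

/-- the centroid witnesses nonemptiness of the algebraic relative interior of a polytope. -/
lemma exists_algRelInt (s : Finset W) (hne : s.Nonempty) :
    ∃ p, p ∈ algRelInt (convexHull ℝ (s : Set W)) := by
  classical
  set k : ℝ := (s.card : ℝ) with hk
  have hkpos : 0 < k := by
    simp only [hk, Nat.cast_pos, Finset.card_pos]; exact hne
  set w : W → ℝ := fun _ => 1 / k with hw
  have hw1 : ∑ y ∈ s, w y = 1 := by
    simp [hw, Finset.sum_const, hk]
    field_simp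
  refine ⟨s.centerMass w id, ?_, ?_⟩
  · exact s.centerMass_mem_convexHull (fun y _ => by positivity) (by rw [hw1]; norm_num)
      (fun y hy => Finset.mem_coe.2 hy)
  · intro y hy
    rw [Finset.convexHull_eq] at hy
    obtain ⟨w', hw'0, hw'1, hw'y⟩ := hy
    refine ⟨1 + 1 / (2 * k), by nlinarith [one_div_pos.2 (by positivity : (0:ℝ) < 2 * k)], ?_⟩
    set t : ℝ := 1 + 1 / (2 * k) with htdef
    have hty : y + t • (s.centerMass w id - y) = (1 - t) • s.centerMass w' id + t • s.centerMass w id := by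
      rw [hw'y]; module
    rw [hty, Finset.centerMass_segment _ _ _ _ hw'1 hw1 _ _ (by ring)]
    apply s.centerMass_mem_convexHull
    · intro y hy
      have h1 : w' y ≤ 1 := by
        rw [← hw'1]
        exact Finset.single_le_sum hw'0 hy
      have h2 : (0:ℝ) < 1 / (2 * k) := by positivity
      have h3 : 1 / (2*k) ≤ 1 / k := by
        apply div_le_div_of_nonneg_left (by norm_num) hkpos; linarith
      have hw'0y := hw'0 y hy
      simp only [hw]
      nlinarith
    · have : ∑ y ∈ s, ((1 - t) * w' y + t * w y) = 1 := by
        rw [Finset.sum_add_distrib, ← Finset.mul_sum, ← Finset.mul_sum, hw'1, hw1]; ring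
      rw [this]; norm_num
    · exact fun y hy => Finset.mem_coe.2 hy

end helpers

variable {V N : Type*}
  [NormedAddCommGroup V] [NormedSpace ℝ V]
  [NormedAddCommGroup N] [NormedSpace ℝ N]

/-- The normal cone `𝒞(F) ⊆ N` of a face `F` of `Q`, where `N` is identified with
the dual space `V*` via the pairing `B`: the elements `n` with `B n (q - p) ≥ 0`
for all `q ∈ Q`, `p` any point in the relative interior of `F`. -/
def normalConeB (B : N →ₗ[ℝ] Module.Dual ℝ V) (Q F : Set V) : Set N :=
  {n | ∀ p ∈ algRelInt F, ∀ q ∈ Q, 0 ≤ B n (q - p)}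


section cone

variable (B : N →ₗ[ℝ] Module.Dual ℝ V) {Q F : Set V}

lemma mem_cone_iff (hFQ : F ⊆ Q) {p : V} (hp : p ∈ algRelInt F) (m : N) :
    m ∈ normalConeB B Q F ↔ ∀ q ∈ Q, 0 ≤ B m (q - p) := by
  constructor
  · exact fun h => h p hp
  · intro h p' hp' q hq
    have hle : ∀ q ∈ Q, B m p ≤ B m q := by
      intro q hq
      have := h q hq
      rw [map_sub] at this
      linarith
    have hconst : ∀ x ∈ F, B m x = B m p :=
      eq_on_of_relint hp (fun x hx => hle x (hFQ hx)) rfl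
    rw [map_sub]
    have := hconst p' (algRelInt_subset hp')
    have := hle q hq
    linarith

/-- any element of the cone of `F` is constant on `F` (equal to its min). -/
lemma cone_const_on (hFQ : F ⊆ Q) {p : V} (hp : p ∈ algRelInt F) {m : N}
    (hm : m ∈ normalConeB B Q F) : ∀ x ∈ F, B m x = B m p := by
  apply eq_on_of_relint hp _ rfl
  intro x hx
  have := hm p hp x (hFQ hx)
  rw [map_sub] at this
  linarith

end cone

section poly

variable (B : N →ₗ[ℝ] Module.Dual ℝ V) (s : Finset V) (hsne : s.Nonempty)

/-- minimum of `B n` over the polytope. -/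
noncomputable def cmin (n : N) : ℝ := s.inf' hsne (fun x => B n x)

/-- the argmin face of `n`. -/
def Fmin (n : N) : Set V := {q ∈ convexHull ℝ (s : Set V) | B n q = cmin B s hsne n}

lemma cmin_le (n : N) : ∀ q ∈ convexHull ℝ (s : Set V), cmin B s hsne n ≤ B n q := by
  intro q hq
  have hconv : Convex ℝ {x : V | cmin B s hsne n ≤ B n x} :=
    convex_halfSpace_ge (B n).isLinear _
  exact convexHull_min (fun x hx => show cmin B s hsne n ≤ B n x from Finset.inf'_le _ (Finset.mem_coe.1 hx)) hconv hq

lemma Fmin_nonempty (n : N) : (Fmin B s hsne n).Nonempty := by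
  obtain ⟨x, hx, hfx⟩ := s.exists_mem_eq_inf' hsne (fun x => B n x)
  exact ⟨x, subset_convexHull ℝ _ hx, hfx.symm⟩

lemma isFace_Fmin (n : N) : IsFace (convexHull ℝ (s : Set V)) (Fmin B s hsne n) :=
  ⟨Fmin_nonempty B s hsne n, B n, cmin B s hsne n, cmin_le B s hsne n, rfl⟩

lemma Fmin_subset (n : N) : Fmin B s hsne n ⊆ convexHull ℝ (s : Set V) := fun _ h => h.1

lemma Fmin_eq_hull (n : N) :
    Fmin B s hsne n = convexHull ℝ ((s.filter (fun x => B n x = cmin B s hsne n)) : Set V) :=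
  face_eq_convexHull s (B n) _ (fun x hx => Finset.inf'_le _ hx)

lemma Fmin_relint (n : N) : ∃ p, p ∈ algRelInt (Fmin B s hsne n) := by
  rw [Fmin_eq_hull]
  apply exists_algRelInt
  obtain ⟨x, hx, hfx⟩ := s.exists_mem_eq_inf' hsne (fun x => B n x)
  exact ⟨x, Finset.mem_filter.2 ⟨hx, hfx.symm⟩⟩

/-- generic face nonempty relint + conv hull presentation -/
lemma face_relint {F : Set V} (hF : IsFace (convexHull ℝ (s : Set V)) F) :
    ∃ p, p ∈ algRelInt F := by
  obtain ⟨hne, f, c, hfc, rfl⟩ := hF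
  rw [face_eq_convexHull s f c (fun x hx => hfc x (subset_convexHull ℝ _ hx))]
  apply exists_algRelInt
  rw [face_eq_convexHull s f c (fun x hx => hfc x (subset_convexHull ℝ _ hx))] at hne
  obtain ⟨x, hx⟩ := hne
  rcases Finset.eq_empty_or_nonempty (s.filter (fun x => f x = c)) with h | h
  · rw [h] at hx; simp at hx
  · exact h

end poly

section main

variable (B : N →ₗ[ℝ] Module.Dual ℝ V) (s : Finset V) (hsne : s.Nonempty)

lemma face_sub {F Q : Set V} (hF : IsFace Q F) : F ⊆ Q := by
  obtain ⟨-, f, c, -, rfl⟩ := hF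
  exact fun x hx => hx.1

lemma Bnp_eq_cmin {F : Set V} (hF : IsFace (convexHull ℝ (s : Set V)) F) {p : V}
    (hp : p ∈ algRelInt F) {n : N} (hn : n ∈ normalConeB B (convexHull ℝ (s : Set V)) F) :
    B n p = cmin B s hsne n := by
  have hpQ : p ∈ convexHull ℝ (s : Set V) := face_sub hF (algRelInt_subset hp)
  have h1 : cmin B s hsne n ≤ B n p := cmin_le B s hsne n p hpQ
  have h2 : B n p ≤ cmin B s hsne n := by
    apply Finset.le_inf'
    intro x hx
    have := hn p hp x (subset_convexHull ℝ _ hx)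
    rw [map_sub] at this
    linarith
  linarith

lemma face_subset_Fmin {F : Set V} (hF : IsFace (convexHull ℝ (s : Set V)) F) {n : N}
    (hn : n ∈ normalConeB B (convexHull ℝ (s : Set V)) F) : F ⊆ Fmin B s hsne n := by
  obtain ⟨p, hp⟩ := face_relint s hF
  have hBnp := Bnp_eq_cmin B s hsne hF hp hn
  have hconst : ∀ x ∈ F, B n x = cmin B s hsne n := by
    apply eq_on_of_relint hp _ hBnp
    exact fun q hq => cmin_le B s hsne n q (face_sub hF hq)
  exact fun x hx => ⟨face_sub hF hx, hconst x hx⟩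

lemma eq_Fmin (hB : Function.Surjective B) {F : Set V}
    (hF : IsFace (convexHull ℝ (s : Set V)) F) {n : N}
    (hn : n ∈ algRelInt (normalConeB B (convexHull ℝ (s : Set V)) F)) :
    F = Fmin B s hsne n := by
  apply Set.Subset.antisymm (face_subset_Fmin B s hsne hF hn.1)
  obtain ⟨p, hp⟩ := face_relint s hF
  have hBnp := Bnp_eq_cmin B s hsne hF hp hn.1
  obtain ⟨hne, f, c, hfc, hFeq⟩ := hF
  intro x hx
  by_contra hxF
  have hfx : c < f x := by
    rcases lt_or_eq_of_le (hfc x hx.1) with h | h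
    · exact h
    · exact absurd (hFeq ▸ ⟨hx.1, h.symm⟩ : x ∈ F) hxF
  obtain ⟨m, rfl⟩ := hB f
  have hfp : B m p = c := by
    have : p ∈ F := algRelInt_subset hp
    rw [hFeq] at this
    exact this.2
  have hmcone : m ∈ normalConeB B (convexHull ℝ (s : Set V)) F := by
    rw [mem_cone_iff B (face_sub ⟨hne, B m, c, hfc, hFeq⟩) hp]
    intro q hq
    rw [map_sub, hfp]
    linarith [hfc q hq]
  obtain ⟨t, ht, htm⟩ := hn.2 m hmcone
  have := htm p hp x hx.1
  have hexp : B (m + t • (n - m)) (x - p)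
      = (B m x - B m p) + t * ((B n x - B n p) - (B m x - B m p)) := by
    simp [map_add, map_sub, map_smul, LinearMap.add_apply, LinearMap.sub_apply,
      LinearMap.smul_apply, smul_eq_mul]
    ring
  rw [hexp, hfp, hBnp, hx.2] at this
  nlinarith

lemma mem_relint_cone_Fmin (n : N) :
    n ∈ algRelInt (normalConeB B (convexHull ℝ (s : Set V)) (Fmin B s hsne n)) := by
  obtain ⟨p, hp⟩ := Fmin_relint B s hsne n
  have hpF : p ∈ Fmin B s hsne n := algRelInt_subset hp
  have hBnp : B n p = cmin B s hsne n := hpF.2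
  have hQsub := Fmin_subset B s hsne n
  constructor
  · rw [mem_cone_iff B hQsub hp]
    intro q hq
    rw [map_sub, hBnp]
    linarith [cmin_le B s hsne n q hq]
  · intro m hm
    have hconst : ∀ x ∈ Fmin B s hsne n, B m x = B m p := cone_const_on B hQsub hp hm
    set a : V → ℝ := fun x => B m x - B m p with ha_def
    set b : V → ℝ := fun x => B n x - B n p with hb_def
    have ha : ∀ x ∈ s, 0 ≤ a x := by
      intro x hx
      have := hm p hp x (subset_convexHull ℝ _ hx)
      rw [map_sub] at this
      simpa [ha_def] using this
    have hb : ∀ x ∈ s, 0 ≤ b x := by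
      intro x hx
      have := Finset.inf'_le (fun x => B n x) hx
      show 0 ≤ B n x - B n p
      rw [hBnp]
      linarith [show cmin B s hsne n ≤ B n x from Finset.inf'_le _ hx]
    have hab : ∀ x ∈ s, b x = 0 → a x = 0 := by
      intro x hx hbx
      have hBx : B n x = cmin B s hsne n := by
        have : B n x - B n p = 0 := hbx
        linarith [hBnp]
      have hxF : x ∈ Fmin B s hsne n := ⟨subset_convexHull ℝ _ hx, hBx⟩
      have := hconst x hxF
      show B m x - B m p = 0
      linarith
    obtain ⟨ε, hε, hkey⟩ : ∃ ε : ℝ, 0 < ε ∧ ∀ x ∈ s, ε * a x ≤ (1 + ε) * b x := by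
      classical
      set T := s.filter (fun x => 0 < b x) with hT
      rcases T.eq_empty_or_nonempty with h | h
      · refine ⟨1, one_pos, ?_⟩
        intro x hx
        have hbx : b x = 0 := by
          by_contra hbx
          have : x ∈ T := Finset.mem_filter.2 ⟨hx, lt_of_le_of_ne (hb x hx) (Ne.symm hbx)⟩
          rw [h] at this
          simp at this
        rw [hbx, hab x hx hbx]
        norm_num
      · refine ⟨T.inf' h (fun x => b x / (a x + 1)), ?_, ?_⟩
        · rw [Finset.lt_inf'_iff]
          intro x hx
          have hxs := (Finset.mem_filter.1 hx).1
          have hbx := (Finset.mem_filter.1 hx).2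
          have := ha x hxs
          positivity
        · intro x hx
          by_cases hxT : x ∈ T
          · have h1 : T.inf' h (fun x => b x / (a x + 1)) ≤ b x / (a x + 1) :=
              Finset.inf'_le _ hxT
            have h2 : 0 < a x + 1 := by linarith [ha x hx]
            have h3 : T.inf' h (fun x => b x / (a x + 1)) * (a x + 1) ≤ b x := by
              calc T.inf' h (fun x => b x / (a x + 1)) * (a x + 1)
                  ≤ (b x / (a x + 1)) * (a x + 1) := mul_le_mul_of_nonneg_right h1 h2.le
                _ = b x := by field_simp
            have h4 : 0 < T.inf' h (fun x => b x / (a x + 1)) := by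
              rw [Finset.lt_inf'_iff]
              intro y hy
              have hys := (Finset.mem_filter.1 hy).1
              have hby := (Finset.mem_filter.1 hy).2
              have := ha y hys
              positivity
            nlinarith [hb x hx, mul_nonneg h4.le (hb x hx)]
          · have hbx : b x = 0 := by
              by_contra hbx
              exact hxT (Finset.mem_filter.2 ⟨hx, lt_of_le_of_ne (hb x hx) (Ne.symm hbx)⟩)
            rw [hbx, hab x hx hbx]
            norm_num
    refine ⟨1 + ε, by linarith, ?_⟩
    rw [mem_cone_iff B hQsub hp]
    have hvert : ∀ x ∈ s, B (m + (1 + ε) • (n - m)) p ≤ B (m + (1 + ε) • (n - m)) x := by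
      intro x hx
      have hexp : B (m + (1 + ε) • (n - m)) x - B (m + (1 + ε) • (n - m)) p
          = (1 + ε) * b x - ε * a x := by
        simp only [map_add, map_sub, map_smul, LinearMap.add_apply, LinearMap.sub_apply,
          LinearMap.smul_apply, smul_eq_mul, ha_def, hb_def]
        ring
      have := hkey x hx
      linarith
    have hhalf : convexHull ℝ (s : Set V)
        ⊆ {q : V | B (m + (1 + ε) • (n - m)) p ≤ B (m + (1 + ε) • (n - m)) q} := by
      apply convexHull_min _ (convex_halfSpace_ge (B (m + (1 + ε) • (n - m))).isLinear _)
      exact fun x hx => hvert x (Finset.mem_coe.1 hx)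
    intro q hq
    rw [map_sub]
    have := hhalf hq
    rw [Set.mem_setOf_eq] at this
    linarith

end main

theorem statement8 [FiniteDimensional ℝ V] [FiniteDimensional ℝ N]
    -- `N` is (a model of) the dual space of `V`
    (B : N →ₗ[ℝ] Module.Dual ℝ V) (hB : Function.Bijective B)
    (Q : Set V) (hQpoly : ∃ s : Finset V, Q = convexHull ℝ (s : Set V))
    (hQfull : affineSpan ℝ Q = ⊤) :
    -- every `n ∈ N` lies in the relative interior of `𝒞(F)` for exactly one face
    (∀ n : N, ∃! F : Set V, IsFace Q F ∧ n ∈ algRelInt (normalConeB B Q F)) ∧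
    -- for any choice `n ↦ F_n` of such faces, the set `U_n = {m : F_m ⊆ F_n}` is
    -- the union of the relative interiors of the cones `𝒞(F)` containing `n`,
    -- and it is a neighborhood of `n`
    (∀ Fc : N → Set V,
      (∀ n : N, IsFace Q (Fc n) ∧ n ∈ algRelInt (normalConeB B Q (Fc n))) →
      ∀ n : N,
        ({m : N | Fc m ⊆ Fc n} =
          ⋃ (F : Set V) (_ : IsFace Q F ∧ n ∈ normalConeB B Q F),
            algRelInt (normalConeB B Q F)) ∧
        {m : N | Fc m ⊆ Fc n} ∈ nhds n) := by
  classical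
  obtain ⟨s, rfl⟩ := hQpoly
  have hsne : s.Nonempty := by
    by_contra h
    rw [Finset.not_nonempty_iff_eq_empty] at h
    rw [h] at hQfull
    simp only [Finset.coe_empty, convexHull_empty, AffineSubspace.span_empty] at hQfull
    exact AffineSubspace.bot_ne_top ℝ V V hQfull
  constructor
  · intro n
    refine ⟨Fmin B s hsne n, ⟨isFace_Fmin B s hsne n, mem_relint_cone_Fmin B s hsne n⟩, ?_⟩
    rintro F ⟨hF, hn⟩
    exact eq_Fmin B s hsne hB.2 hF hn
  · intro Fc hFc n
    have hFcm : ∀ m : N, Fc m = Fmin B s hsne m :=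
      fun m => eq_Fmin B s hsne hB.2 (hFc m).1 (hFc m).2
    constructor
    · ext m
      simp only [Set.mem_setOf_eq, Set.mem_iUnion]
      constructor
      · intro h
        refine ⟨Fmin B s hsne m, ⟨⟨isFace_Fmin B s hsne m, ?_⟩, mem_relint_cone_Fmin B s hsne m⟩⟩
        obtain ⟨p, hp⟩ := Fmin_relint B s hsne m
        rw [mem_cone_iff B (Fmin_subset B s hsne m) hp]
        intro q hq
        have hpF : p ∈ Fmin B s hsne n := by
          have := algRelInt_subset hp
          rw [← hFcm m] at this
          have := h this
          rw [hFcm n] at this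
          exact this
        rw [map_sub, hpF.2]
        linarith [cmin_le B s hsne n q hq]
      · rintro ⟨F, ⟨⟨hF, hnF⟩, hm⟩⟩
        rw [hFcm m, hFcm n, ← eq_Fmin B s hsne hB.2 hF hm]
        exact face_subset_Fmin B s hsne hF hnF
    · obtain ⟨δ, hδ, hδkey⟩ : ∃ δ : ℝ, 0 < δ ∧
          ∀ x ∈ s, B n x ≠ cmin B s hsne n → δ ≤ B n x - cmin B s hsne n := by
        set sbad := s.filter (fun x => B n x ≠ cmin B s hsne n) with hsbad
        by_cases hbad : sbad.Nonempty
        · refine ⟨sbad.inf' hbad (fun x => B n x - cmin B s hsne n), ?_, ?_⟩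
          · rw [Finset.lt_inf'_iff]
            intro x hx
            have hxs := (Finset.mem_filter.1 hx).1
            have hxne := (Finset.mem_filter.1 hx).2
            have : cmin B s hsne n ≤ B n x := Finset.inf'_le _ hxs
            rcases lt_or_eq_of_le this with h | h
            · linarith
            · exact absurd h.symm hxne
          · intro x hx hne
            exact Finset.inf'_le _ (Finset.mem_filter.2 ⟨hx, hne⟩)
        · refine ⟨1, one_pos, ?_⟩
          intro x hx hne
          exact absurd (Finset.mem_filter.2 ⟨hx, hne⟩) (fun h => hbad ⟨x, h⟩)
      set U : Set N := {m : N | ∀ x ∈ s, |B m x - B n x| < δ/3} with hU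
      have hUopen : IsOpen U := by
        have : U = ⋂ x ∈ s, {m : N | |B m x - B n x| < δ/3} := by
          ext m
          simp [hU, Set.mem_iInter]
        rw [this]
        apply isOpen_biInter_finset
        intro x _
        have hcont : Continuous fun m : N => B m x :=
          (B.flip x).continuous_of_finiteDimensional
        exact isOpen_lt ((hcont.sub continuous_const).abs) continuous_const
      have hnU : n ∈ U := by
        intro x _
        simp only [sub_self, abs_zero]
        positivity
      have hsub : U ⊆ {m : N | Fc m ⊆ Fc n} := by
        intro m hm
        show Fc m ⊆ Fc n
        rw [hFcm m, hFcm n]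
        obtain ⟨y0, hy0s, hy0⟩ := s.exists_mem_eq_inf' hsne (fun x => B n x)
        have hcm : cmin B s hsne m < cmin B s hsne n + δ/3 := by
          have h1 : cmin B s hsne m ≤ B m y0 := Finset.inf'_le _ hy0s
          have h2 : |B m y0 - B n y0| < δ/3 := hm y0 hy0s
          have h3 : B n y0 = cmin B s hsne n := hy0.symm
          rw [abs_lt] at h2
          linarith [h2.1, h2.2]
        have hFconv : Convex ℝ (Fmin B s hsne n) := by
          have : Fmin B s hsne n
              = convexHull ℝ (s : Set V) ∩ {q : V | B n q = cmin B s hsne n} := rfl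
          rw [this]
          exact (convex_convexHull ℝ _).inter (convex_hyperplane (B n).isLinear _)
        rw [Fmin_eq_hull B s hsne m]
        apply convexHull_min _ hFconv
        intro x hx
        obtain ⟨hxs, hxm⟩ := Finset.mem_filter.1 (Finset.mem_coe.1 hx)
        refine ⟨subset_convexHull ℝ _ hxs, ?_⟩
        by_contra hne
        have h4 := hδkey x hxs hne
        have h5 : |B m x - B n x| < δ/3 := hm x hxs
        rw [abs_lt] at h5
        have h6 : B m x = cmin B s hsne m := hxm
        linarith [h5.1, h5.2]
      exact Filter.mem_of_superset (hUopen.mem_nhds hnU) hsub
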